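/- Define f₁(x,θ) = 2m(1 - (1/4)(1 + 9x/(3+8θ))). For any θ, θ₀ > 0 and any a₁,...,a₅ ∈ (0,1], setting b_e = (√(3+8θ₀)/√(3+8θ))·a_e for leaf edges e ∈ {1,2,3,4} and b₅ = a₅, the six values f₁(a₁a₂,θ), f₁(a₁a₅a₃,θ), f₁(a₁a₅a₄,θ), f₁(a₂a₅a₃,θ), f₁(a₂a₅a₄,θ), f₁(a₃a₄,θ) equal the corresponding six values with parameters (b,θ₀) (assuming θ₀ ≤ θ so that b_e ≤ 1). Hence the parameters are not identifiable from 1-mer distances on the 4-leaf tree. -/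

import Mathlib

/-- The expected 1-mer distance f₁(x, θ) = 2m(1 - (1/4)(1 + 9x/(3+8θ))). -/
noncomputable def f1 (m : ℕ) (x θ : ℝ) : ℝ :=
  2 * m * (1 - (1 / 4) * (1 + 9 * x / (3 + 8 * θ)))

theorem stmt_12 (m : ℕ) (hm : 0 < m) (θ θ₀ : ℝ) (hθ : 0 < θ) (hθ₀ : 0 < θ₀)
    (hθθ : θ₀ ≤ θ) (a : Fin 5 → ℝ) (ha : ∀ e, a e ∈ Set.Ioc (0 : ℝ) 1) :
    let b : Fin 5 → ℝ := fun e =>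
      if e = 4 then a e else (Real.sqrt (3 + 8 * θ₀) / Real.sqrt (3 + 8 * θ)) * a e
    (∀ e, b e ∈ Set.Ioc (0 : ℝ) 1) ∧
    f1 m (a 0 * a 1) θ = f1 m (b 0 * b 1) θ₀ ∧
    f1 m (a 0 * a 4 * a 2) θ = f1 m (b 0 * b 4 * b 2) θ₀ ∧
    f1 m (a 0 * a 4 * a 3) θ = f1 m (b 0 * b 4 * b 3) θ₀ ∧
    f1 m (a 1 * a 4 * a 2) θ = f1 m (b 1 * b 4 * b 2) θ₀ ∧
    f1 m (a 1 * a 4 * a 3) θ = f1 m (b 1 * b 4 * b 3) θ₀ ∧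
    f1 m (a 2 * a 3) θ = f1 m (b 2 * b 3) θ₀ := by
  intro b
  have h3θ : (0:ℝ) < 3 + 8 * θ := by linarith
  have h3θ₀ : (0:ℝ) < 3 + 8 * θ₀ := by linarith
  set c : ℝ := Real.sqrt (3 + 8 * θ₀) / Real.sqrt (3 + 8 * θ) with hc
  have hc2 : c ^ 2 = (3 + 8 * θ₀) / (3 + 8 * θ) := by
    rw [hc, div_pow, Real.sq_sqrt h3θ₀.le, Real.sq_sqrt h3θ.le]
  have hcpos : 0 < c := div_pos (Real.sqrt_pos.2 h3θ₀) (Real.sqrt_pos.2 h3θ)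
  have hcle : c ≤ 1 := by
    rw [hc, div_le_one (Real.sqrt_pos.2 h3θ)]
    exact Real.sqrt_le_sqrt (by linarith)
  have key : ∀ x : ℝ, f1 m x θ = f1 m (c ^ 2 * x) θ₀ := by
    intro x
    unfold f1
    rw [hc2]
    field_simp
  refine ⟨?_, ?_, ?_, ?_, ?_, ?_, ?_⟩
  · intro e
    obtain ⟨h1, h2⟩ := ha e
    by_cases he : e = 4
    · simp [b, he]; exact ⟨(ha 4).1, (ha 4).2⟩
    · simp only [b, he, if_false]
      exact ⟨mul_pos hcpos h1, mul_le_one₀ hcle h1.le h2⟩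
  all_goals
    simp only [b, show (0:Fin 5) ≠ 4 by decide, show (1:Fin 5) ≠ 4 by decide,
      show (2:Fin 5) ≠ 4 by decide, show (3:Fin 5) ≠ 4 by decide, if_false, if_true, if_pos rfl]
    refine (key _).trans ?_
    congr 1
    ring
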